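/- Fix K > 0 and j ∈ {1,2,3}, and let c̃, s̃ be the ultradiscrete elliptic functions. For every v ∈ ℝ, the two identities c̃(u+v) = max(c̃(u)+2s̃(v), 2s̃(u)+c̃(v)) − max(c̃(u)+s̃(u), c̃(v)+s̃(v)) and s̃(u+v) = max(s̃(u)+2c̃(v), 2c̃(u)+s̃(v)) − max(c̃(u)+s̃(u), c̃(v)+s̃(v)) hold for all u ∈ [(j−1)K, jK] if and only if (v − jK) mod 3K ∈ [0, 2K]. -/

import Mathlib

/-- The ultradiscrete elliptic function `c̃`. -/
noncomputable def ctilde (K u : ℝ) : ℝ :=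
  -(9 * K / 2) * (Int.fract ((u - K) / (3 * K)) - 1 / 2) ^ 2
    + (9 * K / 2) * (Int.fract (u / (3 * K)) - 1 / 2) ^ 2

/-- The ultradiscrete elliptic function `s̃`. -/
noncomputable def stilde (K u : ℝ) : ℝ :=
  -(9 * K / 2) * (Int.fract ((u - 2 * K) / (3 * K)) - 1 / 2) ^ 2
    + (9 * K / 2) * (Int.fract (u / (3 * K)) - 1 / 2) ^ 2

/-- The real number `x` reduced modulo `y`, i.e. `x − y⌊x/y⌋`. -/
noncomputable def rmod (x y : ℝ) : ℝ := x - y * ⌊x / y⌋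

section Aux

variable (K : ℝ) (hK : 0 < K)

lemma ctilde_per (u : ℝ) (n : ℤ) (hK : 0 < K) :
    ctilde K (u + 3 * K * n) = ctilde K u := by
  have h3 : (3 : ℝ) * K ≠ 0 := by positivity
  unfold ctilde
  have h1 : (u + 3 * K * n - K) / (3 * K) = (u - K) / (3 * K) + n := by field_simp; ring
  have h2 : (u + 3 * K * n) / (3 * K) = u / (3 * K) + n := by field_simp
  rw [h1, h2, Int.fract_add_intCast, Int.fract_add_intCast]

lemma stilde_per (u : ℝ) (n : ℤ) (hK : 0 < K) :
    stilde K (u + 3 * K * n) = stilde K u := by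
  have h3 : (3 : ℝ) * K ≠ 0 := by positivity
  unfold stilde
  have h1 : (u + 3 * K * n - 2 * K) / (3 * K) = (u - 2 * K) / (3 * K) + n := by field_simp; ring
  have h2 : (u + 3 * K * n) / (3 * K) = u / (3 * K) + n := by field_simp
  rw [h1, h2, Int.fract_add_intCast, Int.fract_add_intCast]

lemma rmod_mem (y : ℝ) (hy : 0 < y) (x : ℝ) : rmod x y ∈ Set.Ico 0 y := by
  have h1 : (⌊x / y⌋ : ℝ) ≤ x / y := Int.floor_le _
  have h2 : x / y < ⌊x / y⌋ + 1 := Int.lt_floor_add_one _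
  have h1' : (⌊x / y⌋ : ℝ) * y ≤ x := (le_div_iff₀ hy).mp h1
  have h2' : x < ((⌊x / y⌋ : ℝ) + 1) * y := (div_lt_iff₀ hy).mp h2
  constructor <;> simp only [rmod] <;> nlinarith

lemma rmod_add_int_mul (y : ℝ) (hy : 0 < y) (x : ℝ) (n : ℤ) :
    rmod (x + y * n) y = rmod x y := by
  have h : (x + y * n) / y = x / y + n := by field_simp
  simp only [rmod, h, Int.floor_add_intCast]
  push_cast; ring

lemma rmod_eq_self (y x : ℝ) (hy : 0 < y) (h0 : 0 ≤ x) (h1 : x < y) :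
    rmod x y = x := by
  have : ⌊x / y⌋ = 0 := by
    rw [Int.floor_eq_zero_iff]
    constructor
    · positivity
    · rw [div_lt_one hy]; exact h1
  simp [rmod, this]

lemma rmod_eq_add (y x : ℝ) (hy : 0 < y) (h0 : -y ≤ x) (h1 : x < 0) :
    rmod x y = x + y := by
  have : ⌊x / y⌋ = -1 := by
    rw [Int.floor_eq_iff]
    push_cast
    constructor
    · rw [neg_le, ← neg_div, div_le_one hy]; linarith
    · have : x / y < 0 := div_neg_of_neg_of_pos h1 hy
      linarith
  simp [rmod, this]
  try ring

lemma fract_self_of (x : ℝ) (h0 : 0 ≤ x) (h1 : x < 1) : Int.fract x = x :=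
  Int.fract_eq_self.2 ⟨h0, h1⟩

lemma fract_neg_of (x : ℝ) (h0 : -1 ≤ x) (h1 : x < 0) : Int.fract x = x + 1 := by
  have : Int.fract x = Int.fract (x + (1 : ℤ)) := (Int.fract_add_intCast x 1).symm
  rw [this]; push_cast
  exact Int.fract_eq_self.2 ⟨by linarith, by linarith⟩

lemma cIco1 {x : ℝ} (hK : 0 < K) (h0 : 0 ≤ x) (h1 : x < K) :
    ctilde K x = K - 2 * x := by
  have h3 : (0:ℝ) < 3 * K := by linarith
  have e1 : Int.fract (x / (3 * K)) = x / (3 * K) := by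
    apply fract_self_of _ (by positivity)
    rw [div_lt_one h3]; linarith
  have e2 : Int.fract ((x - K) / (3 * K)) = (x - K) / (3 * K) + 1 := by
    apply fract_neg_of
    · rw [neg_le, ← neg_div, div_le_one h3]; linarith
    · apply div_neg_of_neg_of_pos (by linarith) h3
  unfold ctilde; rw [e1, e2]; field_simp; ring

lemma cIco2 {x : ℝ} (hK : 0 < K) (h0 : K ≤ x) (h1 : x < 3 * K) :
    ctilde K x = x - 2 * K := by
  have h3 : (0:ℝ) < 3 * K := by linarith
  have e1 : Int.fract (x / (3 * K)) = x / (3 * K) := by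
    apply fract_self_of _ (div_nonneg (by linarith) h3.le)
    rw [div_lt_one h3]; linarith
  have e2 : Int.fract ((x - K) / (3 * K)) = (x - K) / (3 * K) := by
    apply fract_self_of
    · apply div_nonneg (by linarith) h3.le
    · rw [div_lt_one h3]; linarith
  unfold ctilde; rw [e1, e2]; field_simp; ring

lemma sIco1 {x : ℝ} (hK : 0 < K) (h0 : 0 ≤ x) (h1 : x < 2 * K) :
    stilde K x = K - x := by
  have h3 : (0:ℝ) < 3 * K := by linarith
  have e1 : Int.fract (x / (3 * K)) = x / (3 * K) := by
    apply fract_self_of _ (by positivity)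
    rw [div_lt_one h3]; linarith
  have e2 : Int.fract ((x - 2 * K) / (3 * K)) = (x - 2 * K) / (3 * K) + 1 := by
    apply fract_neg_of
    · rw [neg_le, ← neg_div, div_le_one h3]; linarith
    · apply div_neg_of_neg_of_pos (by linarith) h3
  unfold stilde; rw [e1, e2]; field_simp; ring

lemma sIco2 {x : ℝ} (hK : 0 < K) (h0 : 2 * K ≤ x) (h1 : x < 3 * K) :
    stilde K x = 2 * x - 5 * K := by
  have h3 : (0:ℝ) < 3 * K := by linarith
  have e1 : Int.fract (x / (3 * K)) = x / (3 * K) := by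
    apply fract_self_of _ (div_nonneg (by linarith) h3.le)
    rw [div_lt_one h3]; linarith
  have e2 : Int.fract ((x - 2 * K) / (3 * K)) = (x - 2 * K) / (3 * K) := by
    apply fract_self_of
    · apply div_nonneg (by linarith) h3.le
    · rw [div_lt_one h3]; linarith
  unfold stilde; rw [e1, e2]; field_simp; ring

lemma cval1 {x : ℝ} (hK : 0 < K) (h0 : 0 ≤ x) (h1 : x ≤ K) :
    ctilde K x = K - 2 * x := by
  rcases lt_or_eq_of_le h1 with h | h
  · exact cIco1 K hK h0 h
  · rw [h, cIco2 K hK le_rfl (by linarith)]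
    try ring

lemma cval2 {x : ℝ} (hK : 0 < K) (h0 : K ≤ x) (h1 : x ≤ 3 * K) :
    ctilde K x = x - 2 * K := by
  rcases lt_or_eq_of_le h1 with h | h
  · exact cIco2 K hK h0 h
  · have hp := ctilde_per K 0 1 hK
    rw [show (0:ℝ) + 3 * K * ((1:ℤ):ℝ) = 3 * K by push_cast; ring] at hp
    rw [h, hp, cIco1 K hK le_rfl hK]; linarith

lemma sval1 {x : ℝ} (hK : 0 < K) (h0 : 0 ≤ x) (h1 : x ≤ 2 * K) :
    stilde K x = K - x := by
  rcases lt_or_eq_of_le h1 with h | h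
  · exact sIco1 K hK h0 h
  · rw [h, sIco2 K hK le_rfl (by linarith)]
    try ring

lemma sval2 {x : ℝ} (hK : 0 < K) (h0 : 2 * K ≤ x) (h1 : x ≤ 3 * K) :
    stilde K x = 2 * x - 5 * K := by
  rcases lt_or_eq_of_le h1 with h | h
  · exact sIco2 K hK h0 h
  · have hp := stilde_per K 0 1 hK
    rw [show (0:ℝ) + 3 * K * ((1:ℤ):ℝ) = 3 * K by push_cast; ring] at hp
    rw [h, hp, sIco1 K hK le_rfl (by linarith)]; linarith

lemma ctilde_shift {x : ℝ} (hK : 0 < K) : ctilde K x = ctilde K (x - 3 * K) := by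
  have hp := ctilde_per K (x - 3 * K) 1 hK
  rw [show x - 3 * K + 3 * K * ((1:ℤ):ℝ) = x by push_cast; ring] at hp
  exact hp

lemma stilde_shift {x : ℝ} (hK : 0 < K) : stilde K x = stilde K (x - 3 * K) := by
  have hp := stilde_per K (x - 3 * K) 1 hK
  rw [show x - 3 * K + 3 * K * ((1:ℤ):ℝ) = x by push_cast; ring] at hp
  exact hp

lemma cval1' {x : ℝ} (hK : 0 < K) (h0 : 3 * K ≤ x) (h1 : x ≤ 4 * K) :
    ctilde K x = 7 * K - 2 * x := by
  rw [ctilde_shift K hK, cval1 K hK (by linarith) (by linarith)]; ring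

lemma cval2' {x : ℝ} (hK : 0 < K) (h0 : 4 * K ≤ x) (h1 : x ≤ 6 * K) :
    ctilde K x = x - 5 * K := by
  rw [ctilde_shift K hK, cval2 K hK (by linarith) (by linarith)]; ring

lemma sval1' {x : ℝ} (hK : 0 < K) (h0 : 3 * K ≤ x) (h1 : x ≤ 5 * K) :
    stilde K x = 4 * K - x := by
  rw [stilde_shift K hK, sval1 K hK (by linarith) (by linarith)]; ring

lemma sval2' {x : ℝ} (hK : 0 < K) (h0 : 5 * K ≤ x) (h1 : x ≤ 6 * K) :
    stilde K x = 2 * x - 11 * K := by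
  rw [stilde_shift K hK, sval2 K hK (by linarith) (by linarith)]; ring

end Aux

/-- Third pair of ultradiscrete addition formulae: valid on `[(j−1)K, jK]`
exactly when `v` lies in the closure of `D_{j+1} ∪ D_{j+2}` modulo `3K`. -/
theorem ultradiscrete_addition_third_pair (K : ℝ) (hK : 0 < K)
    (j : ℕ) (hj : j = 1 ∨ j = 2 ∨ j = 3) (v : ℝ) :
    (∀ u ∈ Set.Icc (((j : ℝ) - 1) * K) ((j : ℝ) * K),
      ctilde K (u + v) =
        max (ctilde K u + 2 * stilde K v) (2 * stilde K u + ctilde K v)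
          - max (ctilde K u + stilde K u) (ctilde K v + stilde K v) ∧
      stilde K (u + v) =
        max (stilde K u + 2 * ctilde K v) (2 * ctilde K u + stilde K v)
          - max (ctilde K u + stilde K u) (ctilde K v + stilde K v))
    ↔ rmod (v - (j : ℝ) * K) (3 * K) ∈ Set.Icc 0 (2 * K) := by
  have h3K : (0:ℝ) < 3 * K := by linarith
  obtain ⟨rv, n, hrv0, hrv3, hveq⟩ :
      ∃ (rv : ℝ) (n : ℤ), 0 ≤ rv ∧ rv < 3 * K ∧ v = rv + 3 * K * n := by
    refine ⟨rmod v (3 * K), ⌊v / (3 * K)⌋, (rmod_mem (3 * K) h3K v).1,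
      (rmod_mem (3 * K) h3K v).2, ?_⟩
    simp only [rmod]; ring
  subst hveq
  have hcv : ctilde K (rv + 3 * K * n) = ctilde K rv := ctilde_per K rv n hK
  have hsv : stilde K (rv + 3 * K * n) = stilde K rv := stilde_per K rv n hK
  have hcw : ∀ u : ℝ, ctilde K (u + (rv + 3 * K * n)) = ctilde K (u + rv) := fun u => by
    rw [show u + (rv + 3 * K * (n:ℝ)) = (u + rv) + 3 * K * (n:ℝ) by ring]
    exact ctilde_per K _ n hK
  have hsw : ∀ u : ℝ, stilde K (u + (rv + 3 * K * n)) = stilde K (u + rv) := fun u => by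
    rw [show u + (rv + 3 * K * (n:ℝ)) = (u + rv) + 3 * K * (n:ℝ) by ring]
    exact stilde_per K _ n hK
  have hmod : ∀ a : ℝ, rmod (rv + 3 * K * n - a) (3 * K) = rmod (rv - a) (3 * K) := fun a => by
    rw [show rv + 3 * K * (n:ℝ) - a = (rv - a) + 3 * K * (n:ℝ) by ring]
    exact rmod_add_int_mul (3 * K) h3K _ n
  simp only [hcv, hsv, hcw, hsw, hmod]
  rcases hj with hj | hj | hj <;> subst hj <;> push_cast
  -- ================= j = 1 =================
  · rw [show ((1:ℝ) - 1) * K = 0 by ring, show (1:ℝ) * K = K by ring]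
    constructor
    · -- forward: identities ⇒ condition
      intro hall
      by_contra hc
      have hx := rmod_mem (3 * K) h3K (rv - K)
      rw [Set.mem_Ico] at hx
      rw [Set.mem_Icc] at hc
      push_neg at hc
      have h2K := hc hx.1
      rcases le_or_gt K rv with hr | hr
      · rw [rmod_eq_self (3 * K) (rv - K) h3K (by linarith) (by linarith)] at h2K
        linarith
      · rw [rmod_eq_add (3 * K) (rv - K) h3K (by linarith) (by linarith)] at h2K
        have hrpos : 0 < rv := by linarith
        obtain ⟨h1, -⟩ := hall rv ⟨by linarith, by linarith⟩
        rw [cval1 K hK hrv0 hr.le, sval1 K hK hrv0 (by linarith)] at h1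
        rcases le_total (rv + rv) K with hs | hs
        · rw [cval1 K hK (by linarith) hs] at h1
          simp only [max_def] at h1; split_ifs at h1 <;> linarith
        · rw [cval2 K hK hs (by linarith)] at h1
          simp only [max_def] at h1; split_ifs at h1 <;> linarith
    · -- backward: condition ⇒ identities
      intro hcond
      rw [Set.mem_Icc] at hcond
      intro u hu
      obtain ⟨hu1, hu2⟩ := hu
      rcases le_or_gt K rv with hr | hr
      · -- rv ∈ [K, 3K)
        have hcvv := cval2 K hK hr (by linarith)
        rcases le_total rv (2 * K) with hr2 | hr2
        · -- rv ∈ [K, 2K]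
          have hsvv := sval1 K hK hrv0 hr2
          have hc := cval2 K hK (x := u + rv) (by linarith) (by linarith)
          rcases le_total (u + rv) (2 * K) with hb | hb
          · rw [hcvv, hsvv, hc, sval1 K hK (x := u + rv) (by linarith) hb,
              cval1 K hK hu1 hu2, sval1 K hK hu1 (by linarith)]
            constructor <;> (simp only [max_def]; split_ifs <;> linarith)
          · rw [hcvv, hsvv, hc, sval2 K hK (x := u + rv) hb (by linarith),
              cval1 K hK hu1 hu2, sval1 K hK hu1 (by linarith)]
            constructor <;> (simp only [max_def]; split_ifs <;> linarith)
        · -- rv ∈ [2K, 3K)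
          have hsvv := sval2 K hK hr2 (by linarith)
          rcases le_total (u + rv) (3 * K) with hb | hb
          · rw [hcvv, hsvv, cval2 K hK (x := u + rv) (by linarith) hb,
              sval2 K hK (x := u + rv) (by linarith) hb,
              cval1 K hK hu1 hu2, sval1 K hK hu1 (by linarith)]
            constructor <;> (simp only [max_def]; split_ifs <;> linarith)
          · rw [hcvv, hsvv, cval1' K hK (x := u + rv) hb (by linarith),
              sval1' K hK (x := u + rv) hb (by linarith),
              cval1 K hK hu1 hu2, sval1 K hK hu1 (by linarith)]
            constructor <;> (simp only [max_def]; split_ifs <;> linarith)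
      · -- rv < K : condition forces rv = 0
        have h0 : rv ≤ 0 := by
          rw [rmod_eq_add (3 * K) (rv - K) h3K (by linarith) (by linarith)] at hcond
          linarith [hcond.2]
        rw [cval1 K hK hrv0 (by linarith), sval1 K hK hrv0 (by linarith),
          cval1 K hK (x := u + rv) (by linarith) (by linarith),
          sval1 K hK (x := u + rv) (by linarith) (by linarith),
          cval1 K hK hu1 hu2, sval1 K hK hu1 (by linarith)]
        constructor <;> (simp only [max_def]; split_ifs <;> linarith)
  -- ================= j = 2 =================
  · rw [show ((2:ℝ) - 1) * K = K by ring]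
    constructor
    · intro hall
      by_contra hc
      have hx := rmod_mem (3 * K) h3K (rv - 2 * K)
      rw [Set.mem_Ico] at hx
      rw [Set.mem_Icc] at hc
      push_neg at hc
      have h2K := hc hx.1
      rcases le_or_gt (2 * K) rv with hr | hr
      · rw [rmod_eq_self (3 * K) (rv - 2 * K) h3K (by linarith) (by linarith)] at h2K
        linarith
      · rw [rmod_eq_add (3 * K) (rv - 2 * K) h3K (by linarith) (by linarith)] at h2K
        have hrK : K < rv := by linarith
        obtain ⟨h1, -⟩ := hall rv ⟨by linarith, by linarith⟩
        rw [cval2 K hK hrK.le (by linarith), sval1 K hK hrv0 hr.le] at h1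
        rcases le_total (rv + rv) (3 * K) with hs | hs
        · rw [cval2 K hK (by linarith) hs] at h1
          simp only [max_def] at h1; split_ifs at h1 <;> linarith
        · rw [cval1' K hK hs (by linarith)] at h1
          simp only [max_def] at h1; split_ifs at h1 <;> linarith
    · intro hcond
      rw [Set.mem_Icc] at hcond
      intro u hu
      obtain ⟨hu1, hu2⟩ := hu
      rcases le_or_gt (2 * K) rv with hr | hr
      · -- rv ∈ [2K, 3K)
        have hcvv := cval2 K hK (by linarith : K ≤ rv) (by linarith)
        have hsvv := sval2 K hK hr (by linarith)
        have hs := sval1' K hK (x := u + rv) (by linarith) (by linarith)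
        rcases le_total (u + rv) (4 * K) with hb | hb
        · rw [hcvv, hsvv, hs, cval1' K hK (x := u + rv) (by linarith) hb,
            cval2 K hK hu1 (by linarith), sval1 K hK (by linarith) hu2]
          constructor <;> (simp only [max_def]; split_ifs <;> linarith)
        · rw [hcvv, hsvv, hs, cval2' K hK (x := u + rv) hb (by linarith),
            cval2 K hK hu1 (by linarith), sval1 K hK (by linarith) hu2]
          constructor <;> (simp only [max_def]; split_ifs <;> linarith)
      · -- rv < 2K : condition forces rv ≤ K
        have h0 : rv ≤ K := by
          rw [rmod_eq_add (3 * K) (rv - 2 * K) h3K (by linarith) (by linarith)] at hcond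
          linarith [hcond.2]
        have hcvv := cval1 K hK hrv0 h0
        have hsvv := sval1 K hK hrv0 (by linarith)
        have hc := cval2 K hK (x := u + rv) (by linarith) (by linarith)
        rcases le_total (u + rv) (2 * K) with hb | hb
        · rw [hcvv, hsvv, hc, sval1 K hK (x := u + rv) (by linarith) hb,
            cval2 K hK hu1 (by linarith), sval1 K hK (by linarith) hu2]
          constructor <;> (simp only [max_def]; split_ifs <;> linarith)
        · rw [hcvv, hsvv, hc, sval2 K hK (x := u + rv) hb (by linarith),
            cval2 K hK hu1 (by linarith), sval1 K hK (by linarith) hu2]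
          constructor <;> (simp only [max_def]; split_ifs <;> linarith)
  -- ================= j = 3 =================
  · rw [show ((3:ℝ) - 1) * K = 2 * K by ring]
    constructor
    · intro hall
      by_contra hc
      have hx := rmod_mem (3 * K) h3K (rv - 3 * K)
      rw [Set.mem_Ico] at hx
      rw [Set.mem_Icc] at hc
      push_neg at hc
      have h2K := hc hx.1
      rw [rmod_eq_add (3 * K) (rv - 3 * K) h3K (by linarith) (by linarith)] at h2K
      have hr : 2 * K < rv := by linarith
      obtain ⟨-, h2⟩ := hall rv ⟨by linarith, by linarith⟩
      rw [cval2 K hK (by linarith) (by linarith), sval2 K hK hr.le (by linarith)] at h2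
      rcases le_total (rv + rv) (5 * K) with hs | hs
      · rw [sval1' K hK (by linarith) hs] at h2
        simp only [max_def] at h2; split_ifs at h2 <;> linarith
      · rw [sval2' K hK hs (by linarith)] at h2
        simp only [max_def] at h2; split_ifs at h2 <;> linarith
    · intro hcond
      rw [Set.mem_Icc] at hcond
      have h0 : rv ≤ 2 * K := by
        rw [rmod_eq_add (3 * K) (rv - 3 * K) h3K (by linarith) (by linarith)] at hcond
        linarith [hcond.2]
      intro u hu
      obtain ⟨hu1, hu2⟩ := hu
      have hcu := cval2 K hK (x := u) (by linarith) hu2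
      have hsu := sval2 K hK (x := u) hu1 hu2
      rcases le_total rv K with hr | hr
      · -- rv ∈ [0, K]
        have hcvv := cval1 K hK hrv0 hr
        have hsvv := sval1 K hK hrv0 (by linarith)
        rcases le_total (u + rv) (3 * K) with hb | hb
        · rw [hcvv, hsvv, hcu, hsu, cval2 K hK (x := u + rv) (by linarith) hb,
            sval2 K hK (x := u + rv) (by linarith) hb]
          constructor <;> (simp only [max_def]; split_ifs <;> linarith)
        · rw [hcvv, hsvv, hcu, hsu, cval1' K hK (x := u + rv) hb (by linarith),
            sval1' K hK (x := u + rv) hb (by linarith)]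
          constructor <;> (simp only [max_def]; split_ifs <;> linarith)
      · -- rv ∈ [K, 2K]
        have hcvv := cval2 K hK hr (by linarith)
        have hsvv := sval1 K hK hrv0 h0
        have hs := sval1' K hK (x := u + rv) (by linarith) (by linarith)
        rcases le_total (u + rv) (4 * K) with hb | hb
        · rw [hcvv, hsvv, hcu, hsu, hs, cval1' K hK (x := u + rv) (by linarith) hb]
          constructor <;> (simp only [max_def]; split_ifs <;> linarith)
        · rw [hcvv, hsvv, hcu, hsu, hs, cval2' K hK (x := u + rv) hb (by linarith)]
          constructor <;> (simp only [max_def]; split_ifs <;> linarith)
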